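/- For every ε > 0 there exists a measurable set Ω ⊆ ℂ ≅ ℝ² with infinite Lebesgue measure such that for every f ∈ L²(ℝ), ∫_Ω |⟨f, π(z)h₀⟩|² dA(z) ≤ ε · ‖f‖₂². (Equivalently, the localization operator H_Ω with Gaussian window satisfies ‖H_Ω‖ ≤ ε even though |Ω| = ∞.) -/

import Mathlib

open MeasureTheory
open scoped ENNReal NNReal

/-- The Gabor transform with Gaussian window `h₀(t) = 2^{1/4} e^{−πt²}`:
`V f(x + iω) = ⟨f, π(x+iω)h₀⟩ = ∫_ℝ f(t) e^{−2πiωt} h₀(t − x) dt`. -/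
noncomputable def gaborTransform (f : ℝ → ℂ) (z : ℂ) : ℂ :=
  ∫ t : ℝ,
    f t * Complex.exp (-(2 * Real.pi * Complex.I * z.im * t)) *
      (((2 : ℝ) ^ ((1 : ℝ) / 4) * Real.exp (-Real.pi * (t - z.re) ^ 2) : ℝ) : ℂ)

namespace GaborAux

noncomputable def K : ℝ := (2 : ℝ) ^ ((1 : ℝ) / 4)

lemma K_pos : 0 < K := Real.rpow_pos_of_pos two_pos _

lemma K_mul_K : K * K = Real.sqrt 2 := by
  rw [K, ← Real.rpow_add two_pos, Real.sqrt_eq_rpow]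
  norm_num

/-- The (shifted) Gaussian window as an `ℝ≥0∞`-valued kernel. -/
noncomputable def H (x t : ℝ) : ℝ≥0∞ :=
  ENNReal.ofReal (K * Real.exp (-Real.pi * (t - x) ^ 2))

lemma H_measurable : Measurable fun p : ℝ × ℝ => H p.1 p.2 := by
  apply Measurable.ennreal_ofReal
  fun_prop

lemma H_measurable_right (x : ℝ) : Measurable fun t => H x t := by
  apply Measurable.ennreal_ofReal
  fun_prop

lemma H_measurable_left (t : ℝ) : Measurable fun x => H x t := by
  apply Measurable.ennreal_ofReal
  fun_prop

lemma K_exp_pos (x t : ℝ) : 0 < K * Real.exp (-Real.pi * (t - x) ^ 2) :=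
  mul_pos K_pos (Real.exp_pos _)

lemma H_pos (x t : ℝ) : 0 < H x t :=
  ENNReal.ofReal_pos.2 (K_exp_pos x t)

lemma H_lt_top (x t : ℝ) : H x t < ⊤ := ENNReal.ofReal_lt_top

lemma gaussian_integral_shift (x : ℝ) :
    ∫ t : ℝ, K * Real.exp (-Real.pi * (t - x) ^ 2) = K := by
  rw [integral_const_mul,
    integral_sub_right_eq_self (fun t : ℝ => Real.exp (-Real.pi * t ^ 2)) x,
    integral_gaussian, div_self Real.pi_pos.ne', Real.sqrt_one, mul_one]

lemma gaussian_integrable_shift (x : ℝ) :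
    Integrable (fun t : ℝ => K * Real.exp (-Real.pi * (t - x) ^ 2)) := by
  exact ((integrable_exp_neg_mul_sq Real.pi_pos).comp_sub_right x).const_mul K

lemma lintegral_H_right (x : ℝ) : ∫⁻ t, H x t = ENNReal.ofReal K := by
  simp only [H]
  rw [← ofReal_integral_eq_lintegral_ofReal (gaussian_integrable_shift x)
    (Filter.Eventually.of_forall fun t => (K_exp_pos x t).le)]
  rw [gaussian_integral_shift]

lemma gaussian_integral_shift' (t : ℝ) :
    ∫ x : ℝ, K * Real.exp (-Real.pi * (t - x) ^ 2) = K := by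
  rw [integral_const_mul,
    integral_sub_left_eq_self (fun x : ℝ => Real.exp (-Real.pi * x ^ 2)) volume t,
    integral_gaussian, div_self Real.pi_pos.ne', Real.sqrt_one, mul_one]

lemma gaussian_integrable_shift' (t : ℝ) :
    Integrable (fun x : ℝ => K * Real.exp (-Real.pi * (t - x) ^ 2)) := by
  exact ((integrable_exp_neg_mul_sq Real.pi_pos).comp_sub_left t).const_mul K

lemma lintegral_H_left (t : ℝ) : ∫⁻ x, H x t = ENNReal.ofReal K := by
  simp only [H]
  rw [← ofReal_integral_eq_lintegral_ofReal (gaussian_integrable_shift' t)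
    (Filter.Eventually.of_forall fun x => (K_exp_pos x t).le)]
  rw [gaussian_integral_shift']

/-- Pointwise bound on the Gabor transform. -/
lemma enorm_gabor_le (f : ℝ → ℂ) (z : ℂ) :
    (‖gaborTransform f z‖₊ : ℝ≥0∞) ≤ ∫⁻ t, (‖f t‖₊ : ℝ≥0∞) * H z.re t := by
  refine le_trans (enorm_integral_le_lintegral_enorm _) (le_of_eq ?_)
  refine lintegral_congr fun t => ?_
  rw [← ofReal_norm, ← enorm_eq_nnnorm, ← ofReal_norm, H,
    ← ENNReal.ofReal_mul (norm_nonneg _)]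
  congr 1
  have he : ‖Complex.exp (-(2 * (Real.pi : ℂ) * Complex.I * (z.im : ℂ) * (t : ℂ)))‖ = 1 := by
    rw [show -(2 * (Real.pi : ℂ) * Complex.I * (z.im : ℂ) * (t : ℂ)) =
        ((-(2 * Real.pi * z.im * t) : ℝ) : ℂ) * Complex.I by push_cast; ring]
    rw [Complex.norm_exp_ofReal_mul_I]
  rw [norm_mul, norm_mul, he, mul_one, Complex.norm_real]
  have hKl : (2 : ℝ) ^ ((1 : ℝ) / 4) = K := rfl
  rw [hKl, Real.norm_of_nonneg (K_exp_pos z.re t).le]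

/-- Cauchy–Schwarz for the Gaussian kernel. -/
lemma sq_lintegral_le (g : ℝ → ℝ≥0∞) (hg : Measurable g) (x : ℝ) :
    (∫⁻ t, g t * H x t) ^ (2 : ℝ) ≤
      (∫⁻ t, g t ^ (2 : ℝ) * H x t) * ENNReal.ofReal K := by
  set u : ℝ → ℝ≥0∞ := fun t => g t * H x t ^ ((1 : ℝ) / 2) with hu
  set v : ℝ → ℝ≥0∞ := fun t => H x t ^ ((1 : ℝ) / 2) with hv
  have hcs := ENNReal.lintegral_mul_le_Lp_mul_Lq volume
    Real.HolderConjugate.two_two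
    ((hg.mul ((H_measurable_right x).pow_const _)).aemeasurable)
    (((H_measurable_right x).pow_const _).aemeasurable) (f := u) (g := v)
  have huv : ∀ t, (u * v) t = g t * H x t := by
    intro t
    simp only [Pi.mul_apply, hu, hv, mul_assoc]
    rw [← ENNReal.rpow_add_of_nonneg _ _ (by norm_num) (by norm_num)]
    norm_num
  have hu2 : ∀ t, u t ^ (2 : ℝ) = g t ^ (2 : ℝ) * H x t := by
    intro t
    rw [hu, ENNReal.mul_rpow_of_nonneg _ _ (by norm_num : (0:ℝ) ≤ 2),
      ← ENNReal.rpow_mul]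
    norm_num
  have hv2 : ∀ t, v t ^ (2 : ℝ) = H x t := by
    intro t
    rw [hv, ← ENNReal.rpow_mul]
    norm_num
  rw [lintegral_congr huv, lintegral_congr hu2, lintegral_congr hv2,
    lintegral_H_right] at hcs
  calc (∫⁻ t, g t * H x t) ^ (2 : ℝ)
      ≤ ((∫⁻ t, g t ^ (2 : ℝ) * H x t) ^ ((1:ℝ)/2) *
          (ENNReal.ofReal K) ^ ((1:ℝ)/2)) ^ (2 : ℝ) :=
        ENNReal.rpow_le_rpow hcs (by norm_num)
    _ = (∫⁻ t, g t ^ (2 : ℝ) * H x t) * ENNReal.ofReal K := by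
        rw [ENNReal.mul_rpow_of_nonneg _ _ (by norm_num : (0:ℝ) ≤ 2),
          ← ENNReal.rpow_mul, ← ENNReal.rpow_mul]
        norm_num

/-- Integral over the horizontal strip `{z : 0 ≤ Im z ≤ M}` of a function of `Re z`. -/
lemma strip_lintegral (φ : ℝ → ℝ≥0∞) (hφ : Measurable φ) (M : ℝ) :
    ∫⁻ z in {z : ℂ | z.im ∈ Set.Icc 0 M}, φ z.re =
      ENNReal.ofReal M * ∫⁻ x, φ x := by
  have hmp := Complex.volume_preserving_equiv_real_prod.symm
    Complex.measurableEquivRealProd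
  have hemb := Complex.measurableEquivRealProd.symm.measurableEmbedding
  have key := hmp.setLIntegral_comp_preimage_emb hemb
    (fun z : ℂ => φ z.re) {z : ℂ | z.im ∈ Set.Icc 0 M}
  have hpre : Complex.measurableEquivRealProd.symm ⁻¹' {z : ℂ | z.im ∈ Set.Icc 0 M}
      = Set.univ ×ˢ Set.Icc 0 M := by
    ext p
    simp [Complex.measurableEquivRealProd_symm_apply, Set.mem_prod]
  rw [← key, hpre]
  have : ∀ p : ℝ × ℝ, φ (Complex.measurableEquivRealProd.symm p).re = φ p.1 := by
    intro p; rfl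
  rw [lintegral_congr this]
  rw [show (volume : Measure (ℝ × ℝ)) = (volume : Measure ℝ).prod volume from
    Measure.volume_eq_prod _ _, ← Measure.prod_restrict, Measure.restrict_univ]
  rw [lintegral_prod (fun p : ℝ × ℝ => φ p.1)
    ((hφ.comp measurable_fst).aemeasurable : AEMeasurable (fun p : ℝ × ℝ => φ p.1) _)]
  have : ∀ x : ℝ, ∫⁻ _ in Set.Icc 0 M, φ x = φ x * ENNReal.ofReal M := by
    intro x
    rw [setLIntegral_const, Real.volume_Icc, sub_zero]
  rw [lintegral_congr this, lintegral_mul_const _ hφ, mul_comm]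

/-- Tonelli for the Gaussian kernel. -/
lemma tonelli_H (g : ℝ → ℝ≥0∞) (hg : Measurable g) :
    ∫⁻ x, ∫⁻ t, g t * H x t = ENNReal.ofReal K * ∫⁻ t, g t := by
  rw [lintegral_lintegral_swap]
  · have : ∀ t : ℝ, ∫⁻ x, g t * H x t = g t * ENNReal.ofReal K := by
      intro t
      rw [lintegral_const_mul _ (H_measurable_left t), lintegral_H_left]
    rw [lintegral_congr this, lintegral_mul_const _ hg, mul_comm]
  · exact ((hg.comp measurable_snd).mul H_measurable).aemeasurable

end GaborAux

open GaborAux in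
/-- For every `ε > 0` there is a measurable `Ω ⊆ ℂ` of infinite Lebesgue measure with
`∫_Ω |⟨f, π(z)h₀⟩|² dA(z) ≤ ε ‖f‖₂²` for every `f ∈ L²(ℝ)`; i.e. the localization
operator `H_Ω` with Gaussian window satisfies `‖H_Ω‖ ≤ ε` although `|Ω| = ∞`. -/
theorem exists_infinite_measure_set_small_localization :
    ∀ ε : ℝ, 0 < ε → ∃ Ω : Set ℂ, MeasurableSet Ω ∧ volume Ω = ⊤ ∧
      ∀ f : ℝ → ℂ, MemLp f 2 volume →
        ∫ z in Ω, ‖gaborTransform f z‖ ^ 2 ≤ ε * ∫ t : ℝ, ‖f t‖ ^ 2 := by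
  intro ε hε
  set M : ℝ := ε / Real.sqrt 2 with hMdef
  have hM : 0 < M := div_pos hε (Real.sqrt_pos.2 two_pos)
  refine ⟨{z : ℂ | z.im ∈ Set.Icc 0 M}, Complex.measurable_im measurableSet_Icc, ?_, ?_⟩
  · have hset : {z : ℂ | z.im ∈ Set.Icc 0 M}
        = Complex.measurableEquivRealProd ⁻¹' (Set.univ ×ˢ Set.Icc 0 M) := by
      ext z
      simp [Complex.measurableEquivRealProd_apply, Set.mem_prod]
    rw [hset, Complex.volume_preserving_equiv_real_prod.measure_preimage
      ((MeasurableSet.univ.prod measurableSet_Icc).nullMeasurableSet)]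
    rw [show (volume : Measure (ℝ × ℝ)) = (volume : Measure ℝ).prod volume from
      Measure.volume_eq_prod _ _, Measure.prod_prod, Real.volume_univ,
      Real.volume_Icc, sub_zero,
      ENNReal.top_mul (ENNReal.ofReal_pos.2 hM).ne']
  · intro f hf
    have hI0 : 0 ≤ ∫ t : ℝ, ‖f t‖ ^ 2 := integral_nonneg fun t => sq_nonneg _
    by_cases hmeas : AEStronglyMeasurable (fun z => ‖gaborTransform f z‖ ^ 2)
      (volume.restrict {z : ℂ | z.im ∈ Set.Icc 0 M})
    swap
    · rw [integral_non_aestronglyMeasurable hmeas]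
      positivity
    obtain ⟨f', hf'sm, hff'⟩ := hf.aestronglyMeasurable
    have hfm : Measurable f' := hf'sm.measurable
    have hf'2 : MemLp f' 2 volume := hf.ae_eq hff'
    have hgab : ∀ z, gaborTransform f z = gaborTransform f' z := by
      intro z
      refine integral_congr_ae ?_
      filter_upwards [hff'] with t ht
      rw [ht]
    have hIeq : ∫ t : ℝ, ‖f t‖ ^ 2 = ∫ t : ℝ, ‖f' t‖ ^ 2 := by
      refine integral_congr_ae ?_
      filter_upwards [hff'] with t ht
      rw [ht]
    set g : ℝ → ℝ≥0∞ := fun t => (‖f' t‖₊ : ℝ≥0∞) with hgdef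
    have hgm : Measurable g := hfm.nnnorm.coe_nnreal_ennreal
    have hg2m : Measurable fun t => g t ^ (2 : ℝ) := hgm.pow_const _
    -- the inner function of x
    set φ : ℝ → ℝ≥0∞ := fun x => ∫⁻ t, g t ^ (2 : ℝ) * H x t with hφdef
    have hφm : Measurable φ := by
      apply Measurable.lintegral_prod_right
      exact ((hg2m.comp measurable_snd).mul H_measurable)
    have hint2 : Integrable (fun t => ‖f' t‖ ^ 2) := by
      have := memLp_one_iff_integrable.mp
        (hf'2.norm_rpow two_ne_zero ENNReal.ofNat_ne_top)
      have h2 : (2 : ℝ≥0∞).toReal = ((2 : ℕ) : ℝ) := by norm_num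
      simpa [h2, Real.rpow_natCast] using this
    have hSInt : ∫⁻ t, g t ^ (2 : ℝ) = ENNReal.ofReal (∫ t : ℝ, ‖f' t‖ ^ 2) := by
      rw [ofReal_integral_eq_lintegral_ofReal hint2
        (Filter.Eventually.of_forall fun t => sq_nonneg _)]
      refine lintegral_congr fun t => ?_
      rw [ENNReal.ofReal_pow (norm_nonneg _), ofReal_norm, enorm_eq_nnnorm,
        ← ENNReal.rpow_natCast]
      norm_num
      rfl
    rw [integral_eq_lintegral_of_nonneg_ae
      (Filter.Eventually.of_forall fun z => sq_nonneg _) hmeas]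
    refine ENNReal.toReal_le_of_le_ofReal (by positivity) ?_
    calc ∫⁻ z in {z : ℂ | z.im ∈ Set.Icc 0 M}, ENNReal.ofReal (‖gaborTransform f z‖ ^ 2)
        = ∫⁻ z in {z : ℂ | z.im ∈ Set.Icc 0 M},
            (‖gaborTransform f' z‖₊ : ℝ≥0∞) ^ (2 : ℝ) := by
          refine lintegral_congr fun z => ?_
          rw [hgab, ENNReal.ofReal_pow (norm_nonneg _), ofReal_norm, enorm_eq_nnnorm,
            ← ENNReal.rpow_natCast]
          norm_num
      _ ≤ ∫⁻ z in {z : ℂ | z.im ∈ Set.Icc 0 M}, φ z.re * ENNReal.ofReal K := by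
          refine lintegral_mono fun z => ?_
          refine le_trans (ENNReal.rpow_le_rpow (enorm_gabor_le f' z)
            (by norm_num : (0:ℝ) ≤ 2)) ?_
          exact sq_lintegral_le g hgm z.re
      _ = (∫⁻ z in {z : ℂ | z.im ∈ Set.Icc 0 M}, φ z.re) * ENNReal.ofReal K := by
          rw [lintegral_mul_const _
            (show Measurable fun z : ℂ => φ z.re from hφm.comp Complex.measurable_re)]
      _ = ENNReal.ofReal M * (∫⁻ x, φ x) * ENNReal.ofReal K := by
          rw [strip_lintegral φ hφm M]
      _ = ENNReal.ofReal M * (ENNReal.ofReal K * ∫⁻ t, g t ^ (2 : ℝ)) *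
            ENNReal.ofReal K := by
          rw [hφdef]
          rw [show (fun x => ∫⁻ t, g t ^ (2 : ℝ) * H x t) = fun x =>
            ∫⁻ t, (fun s => g s ^ (2 : ℝ)) t * H x t from rfl]
          rw [tonelli_H _ hg2m]
      _ = ENNReal.ofReal (ε * ∫ t : ℝ, ‖f t‖ ^ 2) := by
          rw [hSInt, hIeq]
          set J : ℝ := ∫ t : ℝ, ‖f' t‖ ^ 2 with hJdef
          have hJ : 0 ≤ J := hIeq ▸ hI0
          rw [← ENNReal.ofReal_mul K_pos.le, ← ENNReal.ofReal_mul hM.le,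
            ← ENNReal.ofReal_mul (mul_nonneg hM.le (mul_nonneg K_pos.le hJ))]
          congr 1
          have hK2 : K * K = Real.sqrt 2 := K_mul_K
          have hs2 : Real.sqrt 2 ≠ 0 := (Real.sqrt_pos.2 two_pos).ne'
          calc M * (K * J) * K = (K * K) * M * J := by ring
            _ = ε * J := by
                rw [hK2, hMdef, mul_div_assoc']
                rw [mul_comm (Real.sqrt 2) ε, mul_div_assoc, div_self hs2, mul_one]
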